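/- Fix p ≥ 1. There exists a constant γ_p > 0 such that the following holds: for any (finite or countably infinite) sequence (ξ_i) of independent Bernoulli random variables, if S = Σ_i ξ_i has finite expectation, then E[|S − E[S]|^p] ≤ γ_p (Var(S)^{p/2} + 1). -/

import Mathlib

open MeasureTheory ProbabilityTheory ENNReal

lemma my_exp_le {u : ℝ} (hu : |u| ≤ 1) : Real.exp u ≤ 1 + u + u ^ 2 := by
  have h := Real.exp_bound hu (n := 2) (by norm_num)
  have h2 : |Real.exp u - (1 + u)| ≤ |u| ^ 2 * (3 / 4) := by
    have : (∑ i ∈ Finset.range 2, u ^ i / i.factorial) = 1 + u := by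
      simp [Finset.sum_range_succ]
    calc |Real.exp u - (1 + u)| = |Real.exp u - ∑ i ∈ Finset.range 2, u ^ i / i.factorial| := by
          rw [this]
      _ ≤ |u| ^ 2 * ((2 : ℕ).succ / ((2:ℕ).factorial * 2)) := h
      _ = |u| ^ 2 * (3 / 4) := by norm_num [Nat.factorial]
  have h3 := (abs_le.1 h2).2
  nlinarith [sq_abs u, sq_nonneg u]

lemma my_bdd_integrable {Ω : Type} [MeasurableSpace Ω] {P : Measure Ω} [IsProbabilityMeasure P]
    {f : Ω → ℝ} (hf : AEStronglyMeasurable f P) {C : ℝ} (h : ∀ ω, |f ω| ≤ C) :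
    Integrable f P :=
  Integrable.mono' (integrable_const C) hf (ae_of_all _ fun ω => by
    simpa [Real.norm_eq_abs] using h ω)

lemma my_mgf_le {Ω : Type} [MeasurableSpace Ω] {P : Measure Ω}
    [IsProbabilityMeasure P] {X : Ω → ℝ} (hX : Measurable X)
    (hb : ∀ ω, |X ω| ≤ 1) (h0 : ∫ ω, X ω ∂P = 0) {t : ℝ} (ht : |t| ≤ 1) :
    mgf X P t ≤ Real.exp (t ^ 2 * ∫ ω, X ω ^ 2 ∂P) := by
  have hXi : Integrable X P := my_bdd_integrable hX.aestronglyMeasurable hb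
  have hX2i : Integrable (fun ω => X ω ^ 2) P := by
    refine my_bdd_integrable ((hX.pow_const 2).aestronglyMeasurable) (C := 1) fun ω => ?_
    rw [abs_pow]
    exact pow_le_one₀ (abs_nonneg _) (hb ω)
  have hpt : ∀ ω, Real.exp (t * X ω) ≤ 1 + t * X ω + t ^ 2 * X ω ^ 2 := by
    intro ω
    have habs : |t * X ω| ≤ 1 := by
      rw [abs_mul]
      exact mul_le_one₀ ht (abs_nonneg _) (hb ω)
    calc Real.exp (t * X ω) ≤ 1 + t * X ω + (t * X ω) ^ 2 := my_exp_le habs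
      _ = 1 + t * X ω + t ^ 2 * X ω ^ 2 := by ring
  have hint : Integrable (fun ω => 1 + t * X ω + t ^ 2 * X ω ^ 2) P :=
    ((integrable_const 1).add (hXi.const_mul t)).add (hX2i.const_mul (t ^ 2))
  have hmgfint : Integrable (fun ω => Real.exp (t * X ω)) P := by
    refine my_bdd_integrable ((hX.const_mul t).exp.aestronglyMeasurable)
      (C := Real.exp 1) fun ω => ?_
    rw [abs_of_pos (Real.exp_pos _)]
    refine Real.exp_le_exp.2 ?_
    calc t * X ω ≤ |t * X ω| := le_abs_self _
      _ ≤ 1 := by rw [abs_mul]; exact mul_le_one₀ ht (abs_nonneg _) (hb ω)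
  calc mgf X P t = ∫ ω, Real.exp (t * X ω) ∂P := rfl
    _ ≤ ∫ ω, (1 + t * X ω + t ^ 2 * X ω ^ 2) ∂P :=
        integral_mono hmgfint hint hpt
    _ = 1 + t * 0 + t ^ 2 * ∫ ω, X ω ^ 2 ∂P := by
        have hfi : Integrable (fun ω => 1 + t * X ω) P :=
          (integrable_const 1).add (hXi.const_mul t)
        rw [integral_add hfi (hX2i.const_mul (t ^ 2)),
          integral_add (integrable_const 1) (hXi.const_mul t),
          integral_const_mul, integral_const_mul, h0]
        simp
    _ = t ^ 2 * (∫ ω, X ω ^ 2 ∂P) + 1 := by ring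
    _ ≤ Real.exp (t ^ 2 * ∫ ω, X ω ^ 2 ∂P) := Real.add_one_le_exp _

lemma my_rpow_le {p : ℝ} (hp : 1 ≤ p) {l : ℝ} (hl : 0 < l) (z : ℝ) :
    |z| ^ p ≤ (p / (l * Real.exp 1)) ^ p * (Real.exp (l * z) + Real.exp (-(l * z))) := by
  have hp0 : 0 < p := lt_of_lt_of_le one_pos hp
  have key : ∀ y : ℝ, 0 ≤ y → y ^ p ≤ (p / Real.exp 1) ^ p * Real.exp y := by
    intro y hy
    rcases eq_or_lt_of_le hy with h | h
    · rw [← h, Real.zero_rpow hp0.ne']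
      positivity
    · have hpe : 0 < p / Real.exp 1 := div_pos hp0 (Real.exp_pos 1)
      rw [Real.rpow_def_of_pos h, Real.rpow_def_of_pos hpe, ← Real.exp_add]
      refine Real.exp_le_exp.2 ?_
      have hlog : Real.log (y / p) ≤ y / p - 1 := Real.log_le_sub_one_of_pos (div_pos h hp0)
      rw [Real.log_div h.ne' hp0.ne'] at hlog
      have hpy : (y / p - 1) * p = y - p := by field_simp
      have h2 : (Real.log y - Real.log p) * p ≤ y - p := by
        rw [← hpy]
        exact mul_le_mul_of_nonneg_right hlog hp0.le
      rw [Real.log_div hp0.ne' (Real.exp_pos 1).ne', Real.log_exp]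
      nlinarith
  have h1 : |z| ^ p = (l * |z|) ^ p / l ^ p := by
    rw [Real.mul_rpow hl.le (abs_nonneg z), mul_comm, mul_div_assoc,
      div_self (by positivity : (l:ℝ) ^ p ≠ 0), mul_one]
  have h2 : (l * |z|) ^ p ≤ (p / Real.exp 1) ^ p * Real.exp (l * |z|) :=
    key _ (by positivity)
  have h3 : Real.exp (l * |z|) ≤ Real.exp (l * z) + Real.exp (-(l * z)) := by
    rcases abs_cases z with ⟨h, _⟩ | ⟨h, _⟩
    · rw [h]
      nlinarith [Real.exp_pos (-(l * z))]
    · rw [h, mul_neg, ← neg_mul]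
      nlinarith [Real.exp_pos (l * z)]
  have h4 : (p / (l * Real.exp 1)) ^ p = (p / Real.exp 1) ^ p / l ^ p := by
    rw [← Real.div_rpow (by positivity) hl.le]
    congr 1
    field_simp
  rw [h1, h4, div_mul_eq_mul_div]
  refine div_le_div_of_nonneg_right ?_ (by positivity)
  exact h2.trans (mul_le_mul_of_nonneg_left h3 (by positivity))

/-- Proposition (moment bound for sums of independent Bernoulli variables): for every
`p ≥ 1` there is a constant `γ_p > 0` such that for any countable family `(ξ_i)` of
independent Bernoulli random variables whose sum `S = Σ_i ξ_i` has finite expectation,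
`E[|S - E[S]|^p] ≤ γ_p (Var(S)^{p/2} + 1)`. -/
theorem bernoulli_sum_moment_bound (p : ℝ) (hp : 1 ≤ p) :
    ∃ γ : ℝ, 0 < γ ∧
      ∀ (ι : Type) (_ : Countable ι)
        (Ω : Type) (_ : MeasurableSpace Ω) (P : Measure Ω),
        IsProbabilityMeasure P →
        ∀ ξ : ι → Ω → ℝ,
        (∀ i, Measurable (ξ i)) →
        -- each ξ_i is Bernoulli: it takes values in {0, 1}
        (∀ i ω, ξ i ω = 0 ∨ ξ i ω = 1) →
        -- the ξ_i are independent
        iIndepFun ξ P →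
        -- S = Σ_i ξ_i has finite expectation
        ∀ S : Ω → ℝ, (∀ ω, S ω = ∑' i, ξ i ω) →
        Integrable S P →
        ∫⁻ ω, ENNReal.ofReal (|S ω - ∫ x, S x ∂P| ^ p) ∂P
          ≤ ENNReal.ofReal γ * ((evariance S P) ^ (p / 2) + 1) := by
  classical
  have hp0 : 0 < p := lt_of_lt_of_le one_pos hp
  have hepos := Real.exp_pos 1
  refine ⟨2 * Real.exp 1 * (p / Real.exp 1) ^ p, by positivity, ?_⟩
  intro ι _inst Ω _mΩ P hP ξ hmeas h01 hindep S hSdef hSint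
  haveI := hP
  set γ : ℝ := 2 * Real.exp 1 * (p / Real.exp 1) ^ p with hγdef
  have hγpos : 0 < γ := by positivity
  have hξ0 : ∀ i ω, 0 ≤ ξ i ω := fun i ω => by rcases h01 i ω with h | h <;> rw [h] <;> norm_num
  have hξ1 : ∀ i ω, ξ i ω ≤ 1 := fun i ω => by rcases h01 i ω with h | h <;> rw [h] <;> norm_num
  have hξb : ∀ i ω, |ξ i ω| ≤ 1 := fun i ω => abs_le.2 ⟨by linarith [hξ0 i ω], hξ1 i ω⟩
  have hξint : ∀ i, Integrable (ξ i) P := fun i =>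
    my_bdd_integrable (hmeas i).aestronglyMeasurable (hξb i)
  set q : ι → ℝ := fun i => ∫ ω, ξ i ω ∂P with hqdef
  set m : ℝ := ∫ ω, S ω ∂P with hmdef
  by_cases hq : Summable q
  · -- main case: q summable
    rcases eq_top_or_lt_top (evariance S P) with hvar | hvar
    · rw [hvar]
      rw [ENNReal.top_rpow_of_pos (by positivity : (0:ℝ) < p / 2), top_add,
        ENNReal.mul_top (by simp only [ne_eq, ENNReal.ofReal_eq_zero, not_le]; positivity)]
      exact le_top
    have hL2 : MemLp S 2 P := (evariance_lt_top_iff_memLp hSint.aestronglyMeasurable).1 hvar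
    set σ2 : ℝ := variance S P with hσ2def
    have hσ2nonneg : 0 ≤ σ2 := variance_nonneg S P
    have hev : ENNReal.ofReal σ2 = evariance S P := by
      rw [hσ2def, variance]
      exact ENNReal.ofReal_toReal hvar.ne
    -- enumeration by finsets
    haveI : Encodable ι := Encodable.ofCountable ι
    have hfinj : Function.Injective (Encodable.encode (α := ι)) := Encodable.encode_injective
    set F : ℕ → Finset ι := fun n =>
      Finset.preimage (Finset.range n) Encodable.encode hfinj.injOn with hFdef
    have hFmono : Monotone F := by
      intro a b hab i hi
      simp only [hFdef, Finset.mem_preimage, Finset.mem_range] at *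
      omega
    have hFmem : ∀ i, i ∈ F (Encodable.encode i + 1) := fun i => by
      simp [hFdef, Finset.mem_preimage, Finset.mem_range]
    have hFtend : Filter.Tendsto F Filter.atTop Filter.atTop :=
      Filter.tendsto_atTop_finset_of_monotone hFmono fun i => ⟨Encodable.encode i + 1, hFmem i⟩
    -- centered variables
    have hq0 : ∀ i, 0 ≤ q i := fun i => integral_nonneg (fun ω => hξ0 i ω)
    have hq1 : ∀ i, q i ≤ 1 := fun i => by
      calc q i ≤ ∫ _ω, (1:ℝ) ∂P := integral_mono (hξint i) (integrable_const 1) (hξ1 i)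
        _ = 1 := by simp
    set X : ι → Ω → ℝ := fun i ω => ξ i ω - q i with hXdef
    have hXmeas : ∀ i, Measurable (X i) := fun i => (hmeas i).sub measurable_const
    have hXb : ∀ i ω, |X i ω| ≤ 1 := fun i ω => abs_le.2
      ⟨by have h1 := hξ0 i ω; have h2 := hq1 i; simp only [hXdef]; linarith,
       by have h1 := hξ1 i ω; have h2 := hq0 i; simp only [hXdef]; linarith⟩
    have hXint : ∀ i, Integrable (X i) P := fun i => (hξint i).sub (integrable_const _)
    have hX0 : ∀ i, ∫ ω, X i ω ∂P = 0 := fun i => by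
      simp only [hXdef]
      rw [integral_sub (hξint i) (integrable_const _), integral_const]
      simp [hqdef]
    set v : ι → ℝ := fun i => ∫ ω, X i ω ^ 2 ∂P with hvdef
    have hv0 : ∀ i, 0 ≤ v i := fun i => integral_nonneg fun ω => sq_nonneg _
    have hXL2 : ∀ i, MemLp (X i) 2 P := fun i =>
      MemLp.of_bound (hXmeas i).aestronglyMeasurable 1 (ae_of_all _ fun ω => by
        rw [Real.norm_eq_abs]; exact hXb i ω)
    have hXindep : iIndepFun X P :=
      hindep.comp (fun i x => x - q i) (fun i => measurable_id.sub_const (q i))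
    -- partial sums
    set Sn : ℕ → Ω → ℝ := fun n ω => ∑ i ∈ F n, ξ i ω with hSndef
    set mn : ℕ → ℝ := fun n => ∑ i ∈ F n, q i with hmndef
    set V : ℕ → ℝ := fun n => ∑ i ∈ F n, v i with hVdef
    have hSnmeas : ∀ n, Measurable (Sn n) := fun n => Finset.measurable_sum _ fun i _ => hmeas i
    have hXsum : ∀ n ω, (∑ i ∈ F n, X i ω) = Sn n ω - mn n := fun n ω => by
      simp only [hXdef, hSndef, hmndef]
      rw [Finset.sum_sub_distrib]
    have hSn0 : ∀ n ω, 0 ≤ Sn n ω := fun n ω => Finset.sum_nonneg fun i _ => hξ0 i ω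
    have hSnb : ∀ n ω, Sn n ω ≤ (F n).card := fun n ω => by
      calc Sn n ω ≤ ∑ _i ∈ F n, (1:ℝ) := Finset.sum_le_sum fun i _ => hξ1 i ω
        _ = (F n).card := by simp
    have hSnmono : ∀ ω, Monotone (fun n => Sn n ω) := fun ω a b hab =>
      Finset.sum_le_sum_of_subset_of_nonneg (hFmono hab) fun i _ _ => hξ0 i ω
    -- a.e. summability and convergence of partial sums
    have hsummable : ∀ᵐ ω ∂P, Summable fun i => ξ i ω := by
      have h2 : ∀ i, ∫⁻ ω, (‖ξ i ω‖₊ : ℝ≥0∞) ∂P = ENNReal.ofReal (q i) := by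
        intro i
        have heq : ∀ ω, (‖ξ i ω‖₊ : ℝ≥0∞) = ENNReal.ofReal (ξ i ω) := fun ω =>
          Real.enorm_eq_ofReal (hξ0 i ω)
        simp_rw [heq]
        rw [← ofReal_integral_eq_lintegral_ofReal (hξint i) (ae_of_all _ fun ω => hξ0 i ω)]
      have h4 : ∫⁻ ω, ∑' i, (‖ξ i ω‖₊ : ℝ≥0∞) ∂P ≠ ⊤ := by
        rw [lintegral_tsum fun i => (hmeas i).nnnorm.coe_nnreal_ennreal.aemeasurable]
        simp_rw [h2]
        rw [← ENNReal.ofReal_tsum_of_nonneg hq0 hq]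
        exact ENNReal.ofReal_ne_top
      have h5 := ae_lt_top (Measurable.ennreal_tsum fun i => (hmeas i).enorm) h4
      filter_upwards [h5] with ω hω
      exact Summable.of_nnnorm (ENNReal.tsum_coe_ne_top_iff_summable.1 hω.ne)
    have haetend : ∀ᵐ ω ∂P, Filter.Tendsto (fun n => Sn n ω) Filter.atTop (nhds (S ω)) := by
      filter_upwards [hsummable] with ω hω
      have hhs := hω.hasSum
      rw [← hSdef ω] at hhs
      exact hhs.comp hFtend
    have haele : ∀ᵐ ω ∂P, ∀ n, Sn n ω ≤ S ω := by
      filter_upwards [hsummable] with ω hω n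
      rw [hSdef ω]
      exact Summable.sum_le_tsum (F n) (fun i _ => hξ0 i ω) hω
    have hSpos : ∀ ω, 0 ≤ S ω := fun ω => by
      rw [hSdef ω]; exact tsum_nonneg fun i => hξ0 i ω
    -- integrals of partial sums
    have hSnint : ∀ n, Integrable (Sn n) P := fun n =>
      integrable_finset_sum _ fun i _ => hξint i
    have hmn_eq : ∀ n, ∫ ω, Sn n ω ∂P = mn n := fun n => by
      simp only [hSndef, hmndef]
      rw [integral_finset_sum _ fun i _ => hξint i]
    have hmn_le : ∀ n, mn n ≤ m := fun n => by
      rw [← hmn_eq n, hmdef]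
      exact integral_mono_ae (hSnint n) hSint (haele.mono fun ω h => h n)
    have hmn_tend : Filter.Tendsto mn Filter.atTop (nhds m) := by
      have h6 : Filter.Tendsto (fun n => ∫ ω, Sn n ω ∂P) Filter.atTop (nhds (∫ ω, S ω ∂P)) := by
        refine tendsto_integral_of_dominated_convergence S
          (fun n => (hSnmeas n).aestronglyMeasurable) hSint ?_ haetend
        intro n
        filter_upwards [haele] with ω hω
        rw [Real.norm_eq_abs, abs_of_nonneg (hSn0 n ω)]
        exact hω n
      simpa only [funext hmn_eq, ← hmdef] using h6
    -- variance of partial sums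
    have hSn2int : ∀ n, Integrable (fun ω => Sn n ω ^ 2) P := fun n =>
      my_bdd_integrable ((hSnmeas n).pow_const 2).aestronglyMeasurable
        (C := ((F n).card : ℝ) ^ 2) fun ω => by
          rw [abs_pow]
          apply pow_le_pow_left₀ (abs_nonneg _) _ 2
          rw [abs_of_nonneg (hSn0 n ω)]
          exact hSnb n ω
    have hSnVar : ∀ n, ∫ ω, (Sn n ω - mn n) ^ 2 ∂P = V n := by
      intro n
      have h1 : variance (∑ i ∈ F n, X i) P = ∑ i ∈ F n, variance (X i) P :=
        IndepFun.variance_sum (fun i _ => hXL2 i)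
          (fun i _ j _ hij => hXindep.indepFun hij)
      have h2 : ∀ i, variance (X i) P = v i := fun i => by
        rw [variance_of_integral_eq_zero (hXL2 i).aestronglyMeasurable.aemeasurable (hX0 i)]
      have hzero : ∫ ω, (∑ i ∈ F n, X i) ω ∂P = 0 := by
        simp only [Finset.sum_apply]
        rw [integral_finset_sum _ fun i _ => hXint i]
        simp only [hX0]
        exact Finset.sum_const_zero
      have h3 : variance (∑ i ∈ F n, X i) P = ∫ ω, (Sn n ω - mn n) ^ 2 ∂P := by
        rw [variance_of_integral_eq_zero (memLp_finset_sum' _ fun i _ => hXL2 i).aestronglyMeasurable.aemeasurable hzero]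
        refine integral_congr_ae (ae_of_all _ fun ω => ?_)
        simp only [Pi.pow_apply, Finset.sum_apply]
        rw [hXsum n ω]
      rw [← h3, h1]
      simp only [h2, hVdef]
    have hVar_eq : ∀ n, V n = ∫ ω, Sn n ω ^ 2 ∂P - mn n ^ 2 := by
      intro n
      rw [← hSnVar n]
      have hexp : ∀ ω, (Sn n ω - mn n) ^ 2
          = Sn n ω ^ 2 - (2 * mn n) * Sn n ω + mn n ^ 2 := fun ω => by ring
      rw [integral_congr_ae (ae_of_all _ hexp)]
      have hi1 : Integrable (fun ω => Sn n ω ^ 2 - (2 * mn n) * Sn n ω) P :=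
        (hSn2int n).sub ((hSnint n).const_mul (2 * mn n))
      rw [integral_add hi1 (integrable_const _),
        integral_sub (hSn2int n) ((hSnint n).const_mul (2 * mn n)),
        integral_const_mul, hmn_eq n, integral_const]
      simp only [measure_univ, ENNReal.toReal_one, probReal_univ, smul_eq_mul, one_mul]
      ring
    have hSn2_tend : Filter.Tendsto (fun n => ∫ ω, Sn n ω ^ 2 ∂P) Filter.atTop
        (nhds (∫ ω, S ω ^ 2 ∂P)) := by
      refine tendsto_integral_of_dominated_convergence (fun ω => S ω ^ 2)
        (fun n => ((hSnmeas n).pow_const 2).aestronglyMeasurable) hL2.integrable_sq ?_ ?_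
      · intro n
        filter_upwards [haele] with ω hω
        rw [Real.norm_eq_abs, abs_pow, abs_of_nonneg (hSn0 n ω)]
        exact pow_le_pow_left₀ (hSn0 n ω) (hω n) 2
      · filter_upwards [haetend] with ω hω
        exact ((continuous_pow 2).tendsto _).comp hω
    have hV_tend : Filter.Tendsto V Filter.atTop (nhds σ2) := by
      have hσ2eq : σ2 = ∫ ω, S ω ^ 2 ∂P - m ^ 2 := by
        rw [hσ2def, variance_eq_sub hL2, ← hmdef]
        rfl
      rw [funext hVar_eq, hσ2eq]
      exact hSn2_tend.sub (((continuous_pow 2).tendsto _).comp hmn_tend)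
    have hVmono : Monotone V := fun a b hab =>
      Finset.sum_le_sum_of_subset_of_nonneg (hFmono hab) fun i _ _ => hv0 i
    have hVle : ∀ n, V n ≤ σ2 := fun n => hVmono.ge_of_tendsto hV_tend n
    -- mgf bound for partial sums
    have hmgf_n : ∀ t : ℝ, |t| ≤ 1 → ∀ n,
        ∫ ω, Real.exp (t * (Sn n ω - mn n)) ∂P ≤ Real.exp (t ^ 2 * V n) := by
      intro t ht n
      have h1 : mgf (∑ i ∈ F n, X i) P t = ∏ i ∈ F n, mgf (X i) P t :=
        hXindep.mgf_sum hXmeas (F n)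
      have h2 : ∏ i ∈ F n, mgf (X i) P t ≤ ∏ i ∈ F n, Real.exp (t ^ 2 * v i) :=
        Finset.prod_le_prod (fun i _ => mgf_nonneg)
          (fun i _ => my_mgf_le (hXmeas i) (hXb i) (hX0 i) ht)
      have h3 : ∏ i ∈ F n, Real.exp (t ^ 2 * v i) = Real.exp (t ^ 2 * V n) := by
        rw [← Real.exp_sum]
        congr 1
        rw [hVdef, Finset.mul_sum]
      have h4 : mgf (∑ i ∈ F n, X i) P t = ∫ ω, Real.exp (t * (Sn n ω - mn n)) ∂P := by
        refine integral_congr_ae (ae_of_all _ fun ω => ?_)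
        simp only [Finset.sum_apply]
        rw [hXsum n ω]
      rw [← h4]
      rw [h1]
      exact h2.trans_eq h3
    have hIn : ∀ t : ℝ, |t| ≤ 1 → ∀ n, ∫ ω, Real.exp (t * (Sn n ω - m)) ∂P
        ≤ Real.exp (t * (mn n - m) + t ^ 2 * V n) := by
      intro t ht n
      have h1 : ∀ ω, Real.exp (t * (Sn n ω - m))
          = Real.exp (t * (mn n - m)) * Real.exp (t * (Sn n ω - mn n)) := fun ω => by
        rw [← Real.exp_add]; congr 1; ring
      rw [integral_congr_ae (ae_of_all _ h1), integral_const_mul, Real.exp_add]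
      exact mul_le_mul_of_nonneg_left (hmgf_n t ht n) (Real.exp_pos _).le
    -- integrability of exponentials of partial sums
    have hexpSn_int : ∀ t : ℝ, ∀ n, Integrable (fun ω => Real.exp (t * (Sn n ω - m))) P := by
      intro t n
      refine my_bdd_integrable ((((hSnmeas n).sub_const m).const_mul t).exp.aestronglyMeasurable)
        (C := Real.exp (|t| * (((F n).card : ℝ) + |m|))) fun ω => ?_
      rw [abs_of_pos (Real.exp_pos _)]
      apply Real.exp_le_exp.2
      calc t * (Sn n ω - m) ≤ |t * (Sn n ω - m)| := le_abs_self _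
        _ = |t| * |Sn n ω - m| := abs_mul _ _
        _ ≤ |t| * (((F n).card : ℝ) + |m|) := by
            apply mul_le_mul_of_nonneg_left _ (abs_nonneg t)
            refine (abs_sub _ _).trans ?_
            rw [abs_of_nonneg (hSn0 n ω)]
            exact add_le_add_left (hSnb n ω) _
    -- mgf bound for S
    have hmgfS : ∀ t : ℝ, |t| ≤ 1 →
        ∫⁻ ω, ENNReal.ofReal (Real.exp (t * (S ω - m))) ∂P
          ≤ ENNReal.ofReal (Real.exp (t ^ 2 * σ2)) := by
      intro t ht
      rcases le_or_gt 0 t with htpos | htneg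
      · -- nonnegative t : monotone convergence
        have hmono : ∀ᵐ ω ∂P, Monotone fun n => ENNReal.ofReal (Real.exp (t * (Sn n ω - m))) := by
          refine ae_of_all _ fun ω a b hab => ?_
          apply ENNReal.ofReal_le_ofReal
          apply Real.exp_le_exp.2
          exact mul_le_mul_of_nonneg_left (sub_le_sub_right (hSnmono ω hab) m) htpos
        have hfae : ∀ᵐ ω ∂P, (⨆ n, ENNReal.ofReal (Real.exp (t * (Sn n ω - m))))
            = ENNReal.ofReal (Real.exp (t * (S ω - m))) := by
          filter_upwards [haetend, hmono] with ω hω hmω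
          have htend2 : Filter.Tendsto (fun n => ENNReal.ofReal (Real.exp (t * (Sn n ω - m))))
              Filter.atTop (nhds (ENNReal.ofReal (Real.exp (t * (S ω - m))))) := by
            apply (ENNReal.continuous_ofReal.tendsto _).comp
            apply (Real.continuous_exp.tendsto _).comp
            exact (hω.sub_const m).const_mul t
          exact tendsto_nhds_unique (tendsto_atTop_iSup hmω) htend2
        calc ∫⁻ ω, ENNReal.ofReal (Real.exp (t * (S ω - m))) ∂P
            = ∫⁻ ω, ⨆ n, ENNReal.ofReal (Real.exp (t * (Sn n ω - m))) ∂P :=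
              lintegral_congr_ae (hfae.mono fun ω h => h.symm)
          _ = ⨆ n, ∫⁻ ω, ENNReal.ofReal (Real.exp (t * (Sn n ω - m))) ∂P :=
              lintegral_iSup' (fun n =>
                ((((hSnmeas n).sub_const m).const_mul t).exp.ennreal_ofReal).aemeasurable) hmono
          _ ≤ ENNReal.ofReal (Real.exp (t ^ 2 * σ2)) := by
              apply iSup_le
              intro n
              rw [← ofReal_integral_eq_lintegral_ofReal (hexpSn_int t n)
                (ae_of_all _ fun ω => (Real.exp_pos _).le)]
              apply ENNReal.ofReal_le_ofReal
              refine (hIn t ht n).trans ?_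
              apply Real.exp_le_exp.2
              have h5 : t * (mn n - m) ≤ 0 :=
                mul_nonpos_of_nonneg_of_nonpos htpos (by linarith [hmn_le n])
              nlinarith [hVle n, sq_nonneg t]
      · -- negative t : dominated convergence
        have hSexp_int : Integrable (fun ω => Real.exp (t * (S ω - m))) P := by
          refine my_bdd_integrable
            (Real.continuous_exp.comp_aestronglyMeasurable
              (((hSint.aestronglyMeasurable).sub aestronglyMeasurable_const).const_mul t))
            (C := Real.exp (-(t * m))) fun ω => ?_
          rw [abs_of_pos (Real.exp_pos _)]
          apply Real.exp_le_exp.2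
          nlinarith [hSpos ω]
        have htendI : Filter.Tendsto (fun n => ∫ ω, Real.exp (t * (Sn n ω - m)) ∂P)
            Filter.atTop (nhds (∫ ω, Real.exp (t * (S ω - m)) ∂P)) := by
          refine tendsto_integral_of_dominated_convergence (fun _ => Real.exp (-(t * m)))
            (fun n => (((hSnmeas n).sub_const m).const_mul t).exp.aestronglyMeasurable)
            (integrable_const _) ?_ ?_
          · intro n
            refine ae_of_all _ fun ω => ?_
            rw [Real.norm_eq_abs, abs_of_pos (Real.exp_pos _)]
            apply Real.exp_le_exp.2
            nlinarith [hSn0 n ω]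
          · filter_upwards [haetend] with ω hω
            exact (Real.continuous_exp.tendsto _).comp ((hω.sub_const m).const_mul t)
        have hlim_le : ∫ ω, Real.exp (t * (S ω - m)) ∂P ≤ Real.exp (t ^ 2 * σ2) := by
          have htendB : Filter.Tendsto (fun n => Real.exp (t * (mn n - m) + t ^ 2 * σ2))
              Filter.atTop (nhds (Real.exp (t * (m - m) + t ^ 2 * σ2))) := by
            apply (Real.continuous_exp.tendsto _).comp
            exact (((hmn_tend.sub_const m).const_mul t)).add_const (t ^ 2 * σ2)
          have hle : ∀ n, ∫ ω, Real.exp (t * (Sn n ω - m)) ∂P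
              ≤ Real.exp (t * (mn n - m) + t ^ 2 * σ2) := fun n =>
            (hIn t ht n).trans (Real.exp_le_exp.2 (by nlinarith [hVle n, sq_nonneg t]))
          have hfin := le_of_tendsto_of_tendsto' htendI htendB hle
          simpa using hfin
        rw [← ofReal_integral_eq_lintegral_ofReal hSexp_int
          (ae_of_all _ fun ω => (Real.exp_pos _).le)]
        exact ENNReal.ofReal_le_ofReal hlim_le
    -- choose the scaling parameter
    set l : ℝ := if σ2 ≤ 1 then 1 else (Real.sqrt σ2)⁻¹ with hldef
    have hl_pos : 0 < l := by
      rw [hldef]; split_ifs with h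
      · norm_num
      · exact inv_pos.2 (Real.sqrt_pos.2 (by linarith))
    have hl_le1 : l ≤ 1 := by
      rw [hldef]; split_ifs with h
      · exact le_refl 1
      · have h1 : 1 ≤ Real.sqrt σ2 := by
          rw [show (1:ℝ) = Real.sqrt 1 by simp]
          exact Real.sqrt_le_sqrt (by linarith)
        exact inv_le_one_of_one_le₀ h1
    have hl2σ : l ^ 2 * σ2 ≤ 1 := by
      rw [hldef]; split_ifs with h
      · simpa using h
      · have h2 : Real.sqrt σ2 ^ 2 = σ2 := Real.sq_sqrt hσ2nonneg
        have h3 : (0:ℝ) < σ2 := by linarith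
        rw [inv_pow, h2]
        rw [inv_mul_cancel₀ h3.ne']
    have habsl : |l| ≤ 1 := abs_le.2 ⟨by linarith, hl_le1⟩
    have habsnl : |(-l)| ≤ 1 := by rwa [abs_neg]
    set c : ℝ := (p / (l * Real.exp 1)) ^ p with hcdef
    have hcpos : 0 < c := by
      rw [hcdef]
      apply Real.rpow_pos_of_pos
      positivity
    have hSaem : AEMeasurable S P := hSint.aestronglyMeasurable.aemeasurable
    have hAmeas : ∀ t : ℝ, AEMeasurable (fun ω => ENNReal.ofReal (Real.exp (t * (S ω - m)))) P :=
      fun t => ENNReal.measurable_ofReal.comp_aemeasurable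
        (Real.measurable_exp.comp_aemeasurable ((hSaem.sub aemeasurable_const).const_mul t))
    have hpt : ∀ ω, ENNReal.ofReal (|S ω - m| ^ p)
        ≤ ENNReal.ofReal c * (ENNReal.ofReal (Real.exp (l * (S ω - m)))
            + ENNReal.ofReal (Real.exp ((-l) * (S ω - m)))) := by
      intro ω
      rw [← ENNReal.ofReal_add (Real.exp_pos _).le (Real.exp_pos _).le,
        ← ENNReal.ofReal_mul hcpos.le]
      apply ENNReal.ofReal_le_ofReal
      have hkey := my_rpow_le hp hl_pos (S ω - m)
      calc |S ω - m| ^ p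
          ≤ (p / (l * Real.exp 1)) ^ p
            * (Real.exp (l * (S ω - m)) + Real.exp (-(l * (S ω - m)))) := hkey
        _ = c * (Real.exp (l * (S ω - m)) + Real.exp ((-l) * (S ω - m))) := by
            rw [hcdef, neg_mul]
    have hmain : ∫⁻ ω, ENNReal.ofReal (|S ω - m| ^ p) ∂P
        ≤ ENNReal.ofReal (c * (2 * Real.exp 1)) := by
      calc ∫⁻ ω, ENNReal.ofReal (|S ω - m| ^ p) ∂P
          ≤ ∫⁻ ω, ENNReal.ofReal c * (ENNReal.ofReal (Real.exp (l * (S ω - m)))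
              + ENNReal.ofReal (Real.exp ((-l) * (S ω - m)))) ∂P := lintegral_mono hpt
        _ = ENNReal.ofReal c * ((∫⁻ ω, ENNReal.ofReal (Real.exp (l * (S ω - m))) ∂P)
              + ∫⁻ ω, ENNReal.ofReal (Real.exp ((-l) * (S ω - m))) ∂P) := by
            rw [lintegral_const_mul' _ _ ENNReal.ofReal_ne_top,
              lintegral_add_left' (hAmeas l)]
        _ ≤ ENNReal.ofReal c * (ENNReal.ofReal (Real.exp (l ^ 2 * σ2))
              + ENNReal.ofReal (Real.exp ((-l) ^ 2 * σ2))) :=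
            mul_le_mul_right (add_le_add (hmgfS l habsl) (hmgfS (-l) habsnl)) _
        _ ≤ ENNReal.ofReal c * (ENNReal.ofReal (Real.exp 1) + ENNReal.ofReal (Real.exp 1)) := by
            apply mul_le_mul_right
            apply add_le_add
            · exact ENNReal.ofReal_le_ofReal (Real.exp_le_exp.2 hl2σ)
            · refine ENNReal.ofReal_le_ofReal (Real.exp_le_exp.2 ?_)
              rw [neg_pow]
              simpa using hl2σ
        _ = ENNReal.ofReal (c * (2 * Real.exp 1)) := by
            rw [← ENNReal.ofReal_add (Real.exp_pos 1).le (Real.exp_pos 1).le,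
              ← ENNReal.ofReal_mul hcpos.le]
            congr 1
            ring
    refine hmain.trans ?_
    by_cases hσcase : σ2 ≤ 1
    · -- small variance
      have hceq : c = (p / Real.exp 1) ^ p := by
        rw [hcdef, hldef, if_pos hσcase, one_mul]
      have hγeq2 : c * (2 * Real.exp 1) = γ := by
        rw [hceq, hγdef]; ring
      rw [hγeq2]
      calc ENNReal.ofReal γ = ENNReal.ofReal γ * 1 := (mul_one _).symm
        _ ≤ ENNReal.ofReal γ * (evariance S P ^ (p / 2) + 1) :=
            mul_le_mul_right le_add_self _
    · -- large variance
      push_neg at hσcase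
      have hsq_pos : 0 < Real.sqrt σ2 := Real.sqrt_pos.2 (by linarith)
      have hceq : c = (p / Real.exp 1) ^ p * σ2 ^ (p / 2) := by
        rw [hcdef, hldef, if_neg (not_le.2 hσcase)]
        have h1 : p / ((Real.sqrt σ2)⁻¹ * Real.exp 1) = (p / Real.exp 1) * Real.sqrt σ2 := by
          field_simp
        rw [h1, Real.mul_rpow (by positivity) hsq_pos.le]
        congr 1
        rw [show Real.sqrt σ2 = σ2 ^ ((1:ℝ)/2) from Real.sqrt_eq_rpow σ2,
          ← Real.rpow_mul hσ2nonneg]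
        congr 1
        ring
      have hfinal : c * (2 * Real.exp 1) = γ * σ2 ^ (p / 2) := by
        rw [hceq, hγdef]; ring
      rw [hfinal, ENNReal.ofReal_mul hγpos.le]
      have h8 : ENNReal.ofReal (σ2 ^ (p / 2)) = evariance S P ^ (p / 2) := by
        rw [← hev, ← ENNReal.ofReal_rpow_of_nonneg hσ2nonneg (by positivity)]
      rw [h8]
      exact mul_le_mul_right le_self_add _
  · -- divergent case : S = 0 a.s.
    set E : ι → Set Ω := fun i => ξ i ⁻¹' {1} with hEdef
    have hEmeas : ∀ i, MeasurableSet (E i) := fun i => (hmeas i) (measurableSet_singleton 1)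
    have hξind : ∀ i ω, ξ i ω = (E i).indicator (fun _ => (1:ℝ)) ω := by
      intro i ω
      rcases h01 i ω with h | h
      · rw [h, Set.indicator_apply, if_neg]
        simp only [hEdef, Set.mem_preimage, Set.mem_singleton_iff, h]
        norm_num
      · rw [h, Set.indicator_apply, if_pos]
        simpa [hEdef] using h
    have hqE : ∀ i, q i = (P (E i)).toReal := by
      intro i
      have : q i = ∫ ω, (E i).indicator (fun _ => (1:ℝ)) ω ∂P := by
        rw [hqdef]
        exact integral_congr_ae (ae_of_all _ (hξind i))
      rw [this, integral_indicator_const _ (hEmeas i)]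
      simp [measureReal_def]
    have htop : ∑' i, P (E i) = ⊤ := by
      by_contra h
      exact hq ((summable_congr fun i => hqE i).2 (ENNReal.summable_toReal h))
    haveI : Infinite ι := by
      by_contra hinf
      rw [not_infinite_iff_finite] at hinf
      exact hq Summable.of_finite
    haveI : Encodable ι := Encodable.ofCountable ι
    haveI : Denumerable ι := Denumerable.ofEncodableOfInfinite ι
    set e : ι ≃ ℕ := Denumerable.eqv ι with hedef
    set s : ℕ → Set Ω := fun n => E (e.symm n) with hsdef
    have hsm : ∀ n, MeasurableSet (s n) := fun n => hEmeas _
    have hsum' : ∑' n, P (s n) = ⊤ :=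
      (e.symm.tsum_eq fun i => P (E i)).trans htop
    have hindepSet : iIndepSet s P := by
      rw [iIndepSet_iff_meas_biInter hsm]
      intro F
      have h1 := hindep.measure_inter_preimage_eq_mul (S := F.map e.symm.toEmbedding)
        (sets := fun _ => ({1} : Set ℝ)) (fun i _ => measurableSet_singleton 1)
      have hset : (⋂ n ∈ F, s n) = ⋂ i ∈ F.map e.symm.toEmbedding, ξ i ⁻¹' {1} := by
        ext ω
        simp only [Set.mem_iInter, Finset.mem_map, Equiv.coe_toEmbedding]
        constructor
        · rintro h i ⟨n, hn, rfl⟩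
          exact h n hn
        · intro h n hn
          exact h _ ⟨n, hn, rfl⟩
      have hprod : ∏ i ∈ F.map e.symm.toEmbedding, P (ξ i ⁻¹' {1}) = ∏ n ∈ F, P (s n) :=
        Finset.prod_map F e.symm.toEmbedding (fun i => P (ξ i ⁻¹' {1}))
      rw [hset, h1, hprod]
    have hlimsup := measure_limsup_eq_one hsm hindepSet hsum'
    have hae : ∀ᵐ ω ∂P, ω ∈ Filter.limsup s Filter.atTop := by
      rw [ae_iff]
      have h2 : {ω | ¬ ω ∈ Filter.limsup s Filter.atTop} = (Filter.limsup s Filter.atTop)ᶜ := rfl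
      rw [h2, measure_compl (MeasurableSet.measurableSet_limsup hsm) (measure_ne_top P _), measure_univ,
        hlimsup, tsub_self]
    have hS0 : ∀ᵐ ω ∂P, S ω = 0 := by
      filter_upwards [hae] with ω hω
      rw [hSdef ω]
      apply tsum_eq_zero_of_not_summable
      intro hsummable
      have hfreq : ∃ᶠ n in Filter.atTop, ω ∈ s n :=
        Filter.mem_limsup_iff_frequently_mem.1 hω
      have hinf2 : {n : ℕ | ω ∈ s n}.Infinite := Nat.frequently_atTop_iff_infinite.1 hfreq
      have htend := hsummable.tendsto_cofinite_zero
      have hev : ∀ᶠ i in Filter.cofinite, ξ i ω < 1 :=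
        htend.eventually_lt_const one_pos
      rw [Filter.eventually_cofinite] at hev
      refine hinf2 (Set.Finite.subset
        (hev.preimage (Set.injOn_of_injective e.symm.injective)) ?_)
      intro n hn
      simp only [Set.mem_preimage, Set.mem_setOf_eq, not_lt]
      have : ξ (e.symm n) ω = 1 := hn
      rw [this]
    have hm0 : m = 0 := by rw [hmdef]; exact integral_eq_zero_of_ae hS0
    have hzero : ∫⁻ ω, ENNReal.ofReal (|S ω - m| ^ p) ∂P = 0 := by
      have h3 : (fun ω => ENNReal.ofReal (|S ω - m| ^ p)) =ᵐ[P] 0 := by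
        filter_upwards [hS0] with ω h
        rw [h, hm0]
        simp [Real.zero_rpow hp0.ne']
      rw [lintegral_congr_ae h3]
      simp
    rw [hzero]
    exact zero_le
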